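/- Let G be a commutative grammar in normal form with N nonterminals. Every skeleton run R (a run from q₀ that cannot be written as R₀ + C with C a nonzero cycle and supp(R) = supp(R₀)) satisfies |R| < γ(N²), where γ(M) = M+1 if G is regular and 2^{M+1} otherwise. -/

import Mathlib

structure CTrans (S Q : Type) where
  src : Q
  out : S → ℤ
  tgt : Q → ℕ

instance {S Q : Type} [Fintype S] [Fintype Q] [DecidableEq S] [DecidableEq Q] :
    DecidableEq (CTrans S Q) := fun a b =>
  decidable_of_iff (a.src = b.src ∧ a.out = b.out ∧ a.tgt = b.tgt) (by
    cases a; cases b; simp)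

structure CGrammar (S Q : Type) [Fintype S] [Fintype Q] [DecidableEq S] [DecidableEq Q] where
  q0 : Q
  delta : Finset (CTrans S Q)

namespace CGrammar

variable {S Q : Type} [Fintype S] [Fintype Q] [DecidableEq S] [DecidableEq Q]

def srcCount (g : CGrammar S Q) (R : CTrans S Q → ℕ) (q : Q) : ℕ :=
  ∑ d ∈ g.delta, if d.src = q then R d else 0

def tgtCount (g : CGrammar S Q) (R : CTrans S Q → ℕ) (q : Q) : ℕ :=
  ∑ d ∈ g.delta, R d * d.tgt q

def parikh (g : CGrammar S Q) (R : CTrans S Q → ℕ) (a : S) : ℤ :=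
  ∑ d ∈ g.delta, (R d : ℤ) * d.out a

def Step (g : CGrammar S Q) (R : CTrans S Q → ℕ) (p q : Q) : Prop :=
  ∃ d ∈ g.delta, 0 < R d ∧ d.src = p ∧ 0 < d.tgt q

def ind (p : Q) : Q → ℕ := fun q => if q = p then 1 else 0

/-- `R` is a commutative subrun from `s` to `t`: support in `delta`,
Euler condition, and connectivity from `s`. -/
def IsSubrun (g : CGrammar S Q) (R : CTrans S Q → ℕ) (s t : Q → ℕ) : Prop :=
  (∀ d, 0 < R d → d ∈ g.delta) ∧
  (∀ q, (g.srcCount R q : ℤ) - (s q : ℤ) = (g.tgtCount R q : ℤ) - (t q : ℤ)) ∧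
  (∀ q, 0 < g.srcCount R q → ∃ p, 0 < s p ∧ Relation.ReflTransGen (g.Step R) p q)

def IsRun (g : CGrammar S Q) (R : CTrans S Q → ℕ) (p : Q) : Prop :=
  g.IsSubrun R (ind p) 0

def IsCycle (g : CGrammar S Q) (R : CTrans S Q → ℕ) (p : Q) : Prop :=
  g.IsSubrun R (ind p) (ind p)

def size (g : CGrammar S Q) (R : CTrans S Q → ℕ) : ℕ := ∑ d ∈ g.delta, R d

def NormalForm (g : CGrammar S Q) : Prop :=
  ∀ d ∈ g.delta, (∑ q, d.tgt q) ≤ 2 ∧ (∑ a, |d.out a|) ≤ 1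

def Regular (g : CGrammar S Q) : Prop :=
  ∀ d ∈ g.delta, (∑ q, d.tgt q) ≤ 1 ∧ (∑ a, |d.out a|) ≤ 1

def Positive (g : CGrammar S Q) : Prop :=
  ∀ d ∈ g.delta, ∀ a, 0 ≤ d.out a

/-- A simple cycle: a cycle (from some nonterminal) that is not the sum of
two nonzero cycles. -/
def SimpleCycle (g : CGrammar S Q) (C : CTrans S Q → ℕ) : Prop :=
  (∃ p, g.IsCycle C p) ∧
  ¬ ∃ C₁ C₂ p₁ p₂, g.IsCycle C₁ p₁ ∧ g.IsCycle C₂ p₂ ∧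
      (∃ d, 0 < C₁ d) ∧ (∃ d, 0 < C₂ d) ∧ (∀ d, C d = C₁ d + C₂ d)

/-- The Parikh image of the grammar. -/
def PsiSet (g : CGrammar S Q) : Set (S → ℤ) :=
  {v | ∃ R, g.IsRun R g.q0 ∧ g.parikh R = v}

end CGrammar

open CGrammar

namespace CGrammar

variable {S Q : Type} [Fintype S] [Fintype Q] [DecidableEq S] [DecidableEq Q]
variable (g : CGrammar S Q)

lemma srcCount_congr {f h : CTrans S Q → ℕ} (hfh : ∀ e, f e = h e) (q : Q) :
    g.srcCount f q = g.srcCount h q :=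
  Finset.sum_congr rfl fun d _ => by rw [hfh d]

lemma tgtCount_congr {f h : CTrans S Q → ℕ} (hfh : ∀ e, f e = h e) (q : Q) :
    g.tgtCount f q = g.tgtCount h q :=
  Finset.sum_congr rfl fun d _ => by rw [hfh d]

lemma srcCount_mono {f h : CTrans S Q → ℕ} (hfh : ∀ e, f e ≤ h e) (q : Q) :
    g.srcCount f q ≤ g.srcCount h q :=
  Finset.sum_le_sum fun d _ => by split <;> simp [hfh d]

lemma srcCount_add (f h : CTrans S Q → ℕ) (q : Q) :
    g.srcCount (fun e => f e + h e) q = g.srcCount f q + g.srcCount h q := by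
  unfold srcCount
  rw [← Finset.sum_add_distrib]
  exact Finset.sum_congr rfl fun d _ => by split <;> simp

lemma tgtCount_add (f h : CTrans S Q → ℕ) (q : Q) :
    g.tgtCount (fun e => f e + h e) q = g.tgtCount f q + g.tgtCount h q := by
  unfold tgtCount
  rw [← Finset.sum_add_distrib]
  exact Finset.sum_congr rfl fun d _ => by ring

lemma srcCount_single {d : CTrans S Q} (hd : d ∈ g.delta) (q : Q) :
    g.srcCount (fun e => if e = d then 1 else 0) q = if d.src = q then 1 else 0 := by
  unfold srcCount
  rw [Finset.sum_eq_single d]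
  · simp
  · intro e _ hed; simp [hed]
  · intro h; exact absurd hd h

lemma tgtCount_single {d : CTrans S Q} (hd : d ∈ g.delta) (q : Q) :
    g.tgtCount (fun e => if e = d then 1 else 0) q = d.tgt q := by
  unfold tgtCount
  rw [Finset.sum_eq_single d]
  · simp
  · intro e _ hed; simp [hed]
  · intro h; exact absurd hd h

lemma srcCount_zero (q : Q) : g.srcCount (fun _ => 0) q = 0 := by
  unfold srcCount; simp

lemma pos_of_srcCount {f : CTrans S Q → ℕ} {q : Q} (h : 0 < g.srcCount f q) :
    ∃ d ∈ g.delta, 0 < f d ∧ d.src = q := by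
  by_contra hcon
  push_neg at hcon
  have : g.srcCount f q = 0 := Finset.sum_eq_zero fun d hd => by
    by_cases hs : d.src = q
    · simp [hs]
      by_contra hf
      exact absurd hs (by simpa using hcon d hd (Nat.pos_of_ne_zero hf))
    · simp [hs]
  omega

lemma pos_of_tgtCount {f : CTrans S Q → ℕ} {q : Q} (h : 0 < g.tgtCount f q) :
    ∃ d ∈ g.delta, 0 < f d ∧ 0 < d.tgt q := by
  by_contra hcon
  push_neg at hcon
  have : g.tgtCount f q = 0 := Finset.sum_eq_zero fun d hd => by
    rcases Nat.eq_zero_or_pos (f d) with h0 | h0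
    · simp [h0]
    · have := hcon d hd h0
      simp; omega
  omega

lemma srcCount_pos {f : CTrans S Q → ℕ} {d : CTrans S Q} (hd : d ∈ g.delta)
    (hf : 0 < f d) (hq : d.src = q) : 0 < g.srcCount f q := by
  have : (if d.src = q then f d else 0) ≤ g.srcCount f q :=
    Finset.single_le_sum (f := fun e => if e.src = q then f e else 0)
      (fun e _ => by split <;> simp) hd
  rw [if_pos hq] at this
  omega

lemma step_mono {f h : CTrans S Q → ℕ} (hfh : ∀ e, f e ≤ h e) {p q : Q}
    (hs : g.Step f p q) : g.Step h p q := by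
  obtain ⟨d, hd, hfd, hsrc, htgt⟩ := hs
  exact ⟨d, hd, lt_of_lt_of_le hfd (hfh d), hsrc, htgt⟩

lemma reach_mono {f h : CTrans S Q → ℕ} (hfh : ∀ e, f e ≤ h e) {p q : Q}
    (hs : Relation.ReflTransGen (g.Step f) p q) :
    Relation.ReflTransGen (g.Step h) p q :=
  Relation.ReflTransGen.mono (fun _ _ hx => g.step_mono hfh hx) p q hs

/-- Key reachability lemma: removing one copy of `d`, reachability survives
either from the original source or from a target of `d`. -/
lemma key_reach {R : CTrans S Q → ℕ} (d : CTrans S Q) {w v : Q}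
    (h : Relation.ReflTransGen (g.Step R) w v) :
    Relation.ReflTransGen (g.Step (fun e => R e - if e = d then 1 else 0)) w v ∨
      ∃ x, 0 < d.tgt x ∧
        Relation.ReflTransGen (g.Step (fun e => R e - if e = d then 1 else 0)) x v := by
  set R' := fun e => R e - if e = d then 1 else 0 with hR'
  induction h with
  | refl => exact Or.inl Relation.ReflTransGen.refl
  | @tail b c hwb hbc ih =>
    obtain ⟨e, he, hRe, hsrc, htgt⟩ := hbc
    by_cases hRe' : 0 < R' e
    · have hstep : g.Step R' b c := ⟨e, he, hRe', hsrc, htgt⟩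
      rcases ih with h1 | ⟨x, hx, h1⟩
      · exact Or.inl (h1.tail hstep)
      · exact Or.inr ⟨x, hx, h1.tail hstep⟩
    · have hed : e = d := by
        by_contra hed
        simp only [hR', if_neg hed] at hRe'
        omega
      subst hed
      exact Or.inr ⟨c, htgt, Relation.ReflTransGen.refl⟩

end CGrammar
namespace CGrammar

variable {S Q : Type} [Fintype S] [Fintype Q] [DecidableEq S] [DecidableEq Q]
variable (g : CGrammar S Q)

lemma src_decomp {R : CTrans S Q → ℕ} {d : CTrans S Q} (hd : d ∈ g.delta)
    (hRd : 0 < R d) (q : Q) :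
    g.srcCount R q = g.srcCount (fun e => R e - if e = d then 1 else 0) q +
      (if d.src = q then 1 else 0) := by
  have h1 : ∀ e, R e = (R e - if e = d then 1 else 0) + (if e = d then 1 else 0) := by
    intro e; by_cases he : e = d <;> simp [he] <;> omega
  rw [srcCount_congr g h1 q, srcCount_add, srcCount_single g hd q]

lemma tgt_decomp {R : CTrans S Q → ℕ} {d : CTrans S Q} (hd : d ∈ g.delta)
    (hRd : 0 < R d) (q : Q) :
    g.tgtCount R q = g.tgtCount (fun e => R e - if e = d then 1 else 0) q + d.tgt q := by
  have h1 : ∀ e, R e = (R e - if e = d then 1 else 0) + (if e = d then 1 else 0) := by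
    intro e; by_cases he : e = d <;> simp [he] <;> omega
  rw [tgtCount_congr g h1 q, tgtCount_add, tgtCount_single g hd q]

lemma safe {R : CTrans S Q → ℕ} {m : Q → ℕ} (hsub : g.IsSubrun R m 0)
    {d : CTrans S Q} (hd : d ∈ g.delta) (hRd : 0 < R d) (hmp : 0 < m d.src)
    (H : g.srcCount (fun e => R e - if e = d then 1 else 0) d.src = 0 ∨
      ∃ z, 0 < (m z - ind d.src z + d.tgt z) ∧
        Relation.ReflTransGen (g.Step (fun e => R e - if e = d then 1 else 0)) z d.src) :
    g.IsSubrun (fun e => R e - if e = d then 1 else 0)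
      (fun q => m q - ind d.src q + d.tgt q) 0 := by
  set R' := fun e => R e - if e = d then 1 else 0 with hR'
  have hle : ∀ e, R' e ≤ R e := fun e => Nat.sub_le _ _
  refine ⟨?_, ?_, ?_⟩
  · intro e he
    exact hsub.1 e (lt_of_lt_of_le he (hle e))
  · intro q
    have e1 := g.src_decomp hd hRd q
    have e2 := g.tgt_decomp hd hRd q
    rw [← hR'] at e1 e2
    have e3 := hsub.2.1 q
    simp only [Pi.zero_apply, CharP.cast_eq_zero, sub_zero] at e3 ⊢
    by_cases hq : q = d.src
    · rw [if_pos hq.symm] at e1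
      have hiq : ind d.src q = 1 := by simp [ind, hq]
      have hmq : 0 < m q := by rw [hq]; exact hmp
      rw [hiq]
      omega
    · rw [if_neg (fun h => hq h.symm)] at e1
      have hiq : ind d.src q = 0 := by simp [ind, hq]
      rw [hiq]
      omega
  · intro v hv
    have hvR : 0 < g.srcCount R v :=
      lt_of_lt_of_le hv (g.srcCount_mono hle v)
    obtain ⟨a, ha, hreach⟩ := hsub.2.2 v hvR
    rcases g.key_reach d hreach with hleft | ⟨x, hx, hxr⟩
    · by_cases hap : a = d.src
      · subst hap
        rcases H with H1 | ⟨z, hz, hzp⟩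
        · exfalso
          rcases hleft.cases_head with heq | ⟨c, hstep, _⟩
          · rw [heq] at H1; omega
          · obtain ⟨e, he, hRe, hsrc, _⟩ := hstep
            have := g.srcCount_pos (f := R') he hRe hsrc
            omega
        · exact ⟨z, hz, hzp.trans hleft⟩
      · refine ⟨a, ?_, hleft⟩
        have : ind d.src a = 0 := by simp [ind, hap]
        dsimp only
        omega
    · refine ⟨x, ?_, hxr⟩
      dsimp only
      omega

lemma select {R : CTrans S Q → ℕ} {m : Q → ℕ} (hsub : g.IsSubrun R m 0)
    (hne : ∃ d ∈ g.delta, 0 < R d) :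
    ∃ d ∈ g.delta, 0 < R d ∧ 0 < m d.src ∧
      g.IsSubrun (fun e => R e - if e = d then 1 else 0)
        (fun q => m q - ind d.src q + d.tgt q) 0 := by
  classical
  -- find a marked vertex with positive outgoing count
  obtain ⟨d₁, hd₁, hRd₁⟩ := hne
  have hw : 0 < g.srcCount R d₁.src := g.srcCount_pos hd₁ hRd₁ rfl
  obtain ⟨a₀, ha₀, hreach₀⟩ := hsub.2.2 d₁.src hw
  have hpex : ∃ p, 0 < m p ∧ 0 < g.srcCount R p := by
    rcases hreach₀.cases_head with heq | ⟨c, hstep, _⟩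
    · exact ⟨a₀, ha₀, heq ▸ hw⟩
    · obtain ⟨e, he, hRe, hsrc, _⟩ := hstep
      exact ⟨a₀, ha₀, g.srcCount_pos he hRe hsrc⟩
  obtain ⟨p, hp, hps⟩ := hpex
  obtain ⟨d₀, hd₀, hRd₀, hsrc₀⟩ := g.pos_of_srcCount hps
  by_cases hA : ∃ z, z ≠ p ∧ 0 < m z ∧ Relation.ReflTransGen (g.Step R) z p
  · obtain ⟨z, hzp, hz, hzr⟩ := hA
    refine ⟨d₀, hd₀, hRd₀, hsrc₀ ▸ hp, g.safe hsub hd₀ hRd₀ (hsrc₀ ▸ hp) ?_⟩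
    rw [hsrc₀]
    rcases g.key_reach d₀ hzr with hleft | ⟨x, hx, hxr⟩
    · refine Or.inr ⟨z, ?_, hleft⟩
      have hi : ind p z = 0 := by simp [ind, hzp]
      omega
    · exact Or.inr ⟨x, by omega, hxr⟩
  · by_cases hB : 2 ≤ m p
    · refine ⟨d₀, hd₀, hRd₀, hsrc₀ ▸ hp, g.safe hsub hd₀ hRd₀ (hsrc₀ ▸ hp) ?_⟩
      rw [hsrc₀]
      refine Or.inr ⟨p, ?_, Relation.ReflTransGen.refl⟩
      have hi : ind p p = 1 := by simp [ind]
      omega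
    · have hmp1 : m p = 1 := by omega
      by_cases hC : ∃ d ∈ g.delta, 0 < R d ∧ d.src = p ∧
          ∃ x, 0 < d.tgt x ∧ Relation.ReflTransGen (g.Step R) x p
      · obtain ⟨d, hd, hRd, hdsrc, x, hxt, hxr⟩ := hC
        refine ⟨d, hd, hRd, hdsrc ▸ hp, g.safe hsub hd hRd (hdsrc ▸ hp) ?_⟩
        rw [hdsrc]
        rcases g.key_reach d hxr with hleft | ⟨x', hx', hxr'⟩
        · refine Or.inr ⟨x, ?_, hleft⟩
          have : d.tgt x ≤ m x - ind p x + d.tgt x := Nat.le_add_left _ _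
          omega
        · refine Or.inr ⟨x', ?_, hxr'⟩
          have : d.tgt x' ≤ m x' - ind p x' + d.tgt x' := Nat.le_add_left _ _
          omega
      · by_cases hD : g.srcCount R p = 1
        · refine ⟨d₀, hd₀, hRd₀, hsrc₀ ▸ hp, g.safe hsub hd₀ hRd₀ (hsrc₀ ▸ hp) ?_⟩
          left
          have := g.src_decomp hd₀ hRd₀ p
          rw [if_pos hsrc₀] at this
          rw [hsrc₀]
          omega
        · exfalso
          -- srcCount R p ≥ 2, so tgtCount R p ≥ 1
          have h2 : 2 ≤ g.srcCount R p := by omega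
          have htc : 0 < g.tgtCount R p := by
            have := hsub.2.1 p
            simp only [Pi.zero_apply] at this
            push_cast at this
            omega
          obtain ⟨e, he, hRe, hetgt⟩ := g.pos_of_tgtCount htc
          have hwsrc : 0 < g.srcCount R e.src := g.srcCount_pos he hRe rfl
          obtain ⟨a, ha, haw⟩ := hsub.2.2 e.src hwsrc
          have hap : Relation.ReflTransGen (g.Step R) a p :=
            haw.tail ⟨e, he, hRe, rfl, hetgt⟩
          have hae : a = p := by
            by_contra hne'
            exact hA ⟨a, hne', ha, hap⟩
          subst hae
          rcases haw.cases_head with heq | ⟨c, hstep, hcw⟩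
          · exact hC ⟨e, he, hRe, heq.symm, a, heq ▸ hetgt, Relation.ReflTransGen.refl⟩
          · obtain ⟨d₂, hd₂, hRd₂, hd₂src, hd₂tgt⟩ := hstep
            exact hC ⟨d₂, hd₂, hRd₂, hd₂src, c, hd₂tgt,
              hcw.tail ⟨e, he, hRe, rfl, hetgt⟩⟩

end CGrammar
inductive PTree (S Q : Type) where
  | leaf (d : CTrans S Q)
  | one (d : CTrans S Q) (t : PTree S Q)
  | two (d : CTrans S Q) (t₁ t₂ : PTree S Q)

namespace PTree

variable {S Q : Type} [Fintype S] [Fintype Q] [DecidableEq S] [DecidableEq Q]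

def trans : PTree S Q → CTrans S Q
  | leaf d => d
  | one d _ => d
  | two d _ _ => d

def root (T : PTree S Q) : Q := T.trans.src

@[simp] lemma trans_leaf (d : CTrans S Q) : (leaf d).trans = d := rfl
@[simp] lemma trans_one (d : CTrans S Q) (t : PTree S Q) : (one d t).trans = d := rfl
@[simp] lemma trans_two (d : CTrans S Q) (t₁ t₂ : PTree S Q) : (two d t₁ t₂).trans = d := rfl
@[simp] lemma root_leaf (d : CTrans S Q) : (leaf d).root = d.src := rfl
@[simp] lemma root_one (d : CTrans S Q) (t : PTree S Q) : (one d t).root = d.src := rfl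
@[simp] lemma root_two (d : CTrans S Q) (t₁ t₂ : PTree S Q) : (two d t₁ t₂).root = d.src := rfl

def cnt : PTree S Q → CTrans S Q → ℕ
  | leaf d, e => if e = d then 1 else 0
  | one d t, e => (if e = d then 1 else 0) + t.cnt e
  | two d t₁ t₂, e => (if e = d then 1 else 0) + t₁.cnt e + t₂.cnt e

@[simp] lemma cnt_leaf (d e : CTrans S Q) : (leaf d).cnt e = if e = d then 1 else 0 := rfl
@[simp] lemma cnt_one (d : CTrans S Q) (t : PTree S Q) (e : CTrans S Q) :
    (one d t).cnt e = (if e = d then 1 else 0) + t.cnt e := rfl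
@[simp] lemma cnt_two (d : CTrans S Q) (t₁ t₂ : PTree S Q) (e : CTrans S Q) :
    (two d t₁ t₂).cnt e = (if e = d then 1 else 0) + t₁.cnt e + t₂.cnt e := rfl

lemma cnt_trans_pos (T : PTree S Q) : 1 ≤ T.cnt T.trans := by
  cases T <;> simp <;> omega

def nodes : PTree S Q → ℕ
  | leaf _ => 1
  | one _ t => 1 + t.nodes
  | two _ t₁ t₂ => 1 + t₁.nodes + t₂.nodes

def spine : PTree S Q → List (PTree S Q)
  | leaf d => [leaf d]
  | one d t => one d t :: t.spine
  | two d t₁ t₂ => two d t₁ t₂ :: (if t₂.nodes ≤ t₁.nodes then t₁.spine else t₂.spine)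

lemma spine_length_pos (T : PTree S Q) : 0 < T.spine.length := by
  cases T with
  | leaf d => simp [spine]
  | one d t => simp [spine]
  | two d t₁ t₂ => simp only [spine, List.length_cons]; omega

lemma spine_getElem_zero (T : PTree S Q) (h : 0 < T.spine.length) : T.spine[0] = T := by
  cases T with
  | leaf d => simp [spine]
  | one d t => simp [spine]
  | two d t₁ t₂ => simp only [spine]; rw [List.getElem_cons_zero]

inductive Sub : PTree S Q → PTree S Q → Prop
  | refl (T) : Sub T T
  | one {T' t} (d) : Sub T' t → Sub T' (one d t)
  | two_l {T' t₁} (d) (t₂) : Sub T' t₁ → Sub T' (two d t₁ t₂)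
  | two_r {T' t₂} (d) (t₁) : Sub T' t₂ → Sub T' (two d t₁ t₂)

lemma cnt_le_of_sub {T' T : PTree S Q} (h : Sub T' T) : ∀ e, T'.cnt e ≤ T.cnt e := by
  induction h with
  | refl => exact fun e => le_refl _
  | one d hs ih => intro e; have := ih e; simp; omega
  | two_l d t₂ hs ih => intro e; have := ih e; simp; omega
  | two_r d t₁ hs ih => intro e; have := ih e; simp; omega

lemma sub_spine : ∀ (T : PTree S Q) (i : ℕ) (h : i < T.spine.length), Sub T.spine[i] T := by
  intro T
  induction T with
  | leaf d =>
    intro i h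
    simp [spine] at h
    subst h
    rw [spine_getElem_zero]
    exact Sub.refl _
  | one d t ih =>
    intro i h
    cases i with
    | zero => rw [spine_getElem_zero]; exact Sub.refl _
    | succ j =>
      simp only [spine, List.length_cons] at h
      have hj : j < t.spine.length := by omega
      have : (one d t).spine[j+1] = t.spine[j] := by
        simp only [spine]; rw [List.getElem_cons_succ]
      rw [this]
      exact Sub.one d (ih j hj)
  | two d t₁ t₂ ih₁ ih₂ =>
    intro i h
    cases i with
    | zero => rw [spine_getElem_zero]; exact Sub.refl _
    | succ j =>
      by_cases hc : t₂.nodes ≤ t₁.nodes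
      · simp only [spine, if_pos hc, List.length_cons] at h ⊢
        have hj : j < t₁.spine.length := by omega
        rw [List.getElem_cons_succ]
        exact Sub.two_l d t₂ (ih₁ j hj)
      · simp only [spine, if_neg hc, List.length_cons] at h ⊢
        have hj : j < t₂.spine.length := by omega
        rw [List.getElem_cons_succ]
        exact Sub.two_r d t₁ (ih₂ j hj)

lemma spine_drop : ∀ (T : PTree S Q) (i : ℕ) (h : i < T.spine.length),
    (T.spine[i]).spine = T.spine.drop i := by
  intro T
  induction T with
  | leaf d =>
    intro i h
    simp [spine] at h
    subst h
    rw [spine_getElem_zero]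
    rfl
  | one d t ih =>
    intro i h
    cases i with
    | zero => rw [spine_getElem_zero]; simp
    | succ j =>
      simp only [spine, List.length_cons] at h
      have hj : j < t.spine.length := by omega
      have h1 : (one d t).spine[j+1] = t.spine[j] := by
        simp only [spine]; rw [List.getElem_cons_succ]
      rw [h1, ih j hj]
      simp only [spine, List.drop_succ_cons]
  | two d t₁ t₂ ih₁ ih₂ =>
    intro i h
    cases i with
    | zero => rw [spine_getElem_zero]; simp
    | succ j =>
      by_cases hc : t₂.nodes ≤ t₁.nodes
      · simp only [spine, if_pos hc, List.length_cons] at h ⊢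
        have hj : j < t₁.spine.length := by omega
        rw [List.getElem_cons_succ, ih₁ j hj, List.drop_succ_cons]
      · simp only [spine, if_neg hc, List.length_cons] at h ⊢
        have hj : j < t₂.spine.length := by omega
        rw [List.getElem_cons_succ, ih₂ j hj, List.drop_succ_cons]

lemma spine_strict : ∀ (T : PTree S Q) (i : ℕ) (h : i < T.spine.length), 0 < i →
    (T.spine[i]).cnt T.trans + 1 ≤ T.cnt T.trans := by
  intro T
  induction T with
  | leaf d =>
    intro i h hi
    simp [spine] at h
    omega
  | one d t ih =>
    intro i h hi
    cases i with
    | zero => omega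
    | succ j =>
      simp only [spine, List.length_cons] at h
      have hj : j < t.spine.length := by omega
      have h1 : (one d t).spine[j+1] = t.spine[j] := by
        simp only [spine]; rw [List.getElem_cons_succ]
      rw [h1]
      have h2 := cnt_le_of_sub (sub_spine t j hj) (one d t).trans
      simp only [trans_one] at h2 ⊢
      have h3 : (one d t).cnt d = 1 + t.cnt d := by simp
      omega
  | two d t₁ t₂ ih₁ ih₂ =>
    intro i h hi
    cases i with
    | zero => omega
    | succ j =>
      by_cases hc : t₂.nodes ≤ t₁.nodes
      · simp only [spine, if_pos hc, List.length_cons] at h ⊢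
        have hj : j < t₁.spine.length := by omega
        rw [List.getElem_cons_succ]
        simp only [trans_two]
        have h2 := cnt_le_of_sub (sub_spine t₁ j hj) d
        have h3 : (two d t₁ t₂).cnt d = 1 + t₁.cnt d + t₂.cnt d := by simp
        omega
      · simp only [spine, if_neg hc, List.length_cons] at h ⊢
        have hj : j < t₂.spine.length := by omega
        rw [List.getElem_cons_succ]
        simp only [trans_two]
        have h2 := cnt_le_of_sub (sub_spine t₂ j hj) d
        have h3 : (two d t₁ t₂).cnt d = 1 + t₁.cnt d + t₂.cnt d := by simp
        omega

lemma nodes_lt_pow (T : PTree S Q) : T.nodes + 1 ≤ 2 ^ T.spine.length := by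
  induction T with
  | leaf d => simp [spine, nodes]
  | one d t ih =>
    have h1 : 1 ≤ 2 ^ t.spine.length := Nat.one_le_two_pow
    simp only [spine, List.length_cons, nodes, pow_succ]
    omega
  | two d t₁ t₂ ih₁ ih₂ =>
    by_cases hc : t₂.nodes ≤ t₁.nodes
    · simp only [spine, if_pos hc, List.length_cons, nodes, pow_succ]
      omega
    · simp only [spine, if_neg hc, List.length_cons, nodes, pow_succ]
      omega

end PTree
namespace CGrammar

variable {S Q : Type} [Fintype S] [Fintype Q] [DecidableEq S] [DecidableEq Q]
variable (g : CGrammar S Q)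

lemma size_congr {f h : CTrans S Q → ℕ} (hfh : ∀ e, f e = h e) : g.size f = g.size h :=
  Finset.sum_congr rfl fun d _ => hfh d

lemma size_add (f h : CTrans S Q → ℕ) : g.size (fun e => f e + h e) = g.size f + g.size h :=
  Finset.sum_add_distrib

lemma size_single {d : CTrans S Q} (hd : d ∈ g.delta) :
    g.size (fun e => if e = d then 1 else 0) = 1 := by
  unfold size
  rw [Finset.sum_ite_eq' g.delta d (fun _ => 1), if_pos hd]

lemma sum_ind (a : Q) : ∑ q, ind a q = 1 := by
  unfold ind
  rw [Finset.sum_ite_eq' Finset.univ a (fun _ => 1), if_pos (Finset.mem_univ a)]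

lemma ite_eq_ind (a q : Q) : (if a = q then (1:ℕ) else 0) = ind a q := by
  unfold ind
  by_cases h : q = a
  · rw [if_pos h.symm, if_pos h]
  · rw [if_neg (fun hh => h hh.symm), if_neg h]

lemma srcCount_split {f f₁ f₂ : CTrans S Q → ℕ} (h : ∀ e, f e = f₁ e + f₂ e) (q : Q) :
    g.srcCount f q = g.srcCount f₁ q + g.srcCount f₂ q := by
  rw [g.srcCount_congr h q]; exact g.srcCount_add f₁ f₂ q

lemma tgtCount_split {f f₁ f₂ : CTrans S Q → ℕ} (h : ∀ e, f e = f₁ e + f₂ e) (q : Q) :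
    g.tgtCount f q = g.tgtCount f₁ q + g.tgtCount f₂ q := by
  rw [g.tgtCount_congr h q]; exact g.tgtCount_add f₁ f₂ q

inductive TValid (g : CGrammar S Q) : PTree S Q → Prop
  | leaf {d : CTrans S Q} : d ∈ g.delta → (∀ q, d.tgt q = 0) → TValid g (.leaf d)
  | one {d : CTrans S Q} {t : PTree S Q} : d ∈ g.delta → TValid g t →
      (∀ q, d.tgt q = ind t.root q) → TValid g (.one d t)
  | two {d : CTrans S Q} {t₁ t₂ : PTree S Q} : d ∈ g.delta → TValid g t₁ → TValid g t₂ →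
      (∀ q, d.tgt q = ind t₁.root q + ind t₂.root q) → TValid g (.two d t₁ t₂)

lemma trans_mem {T : PTree S Q} (hT : g.TValid T) : T.trans ∈ g.delta := by
  cases hT <;> simpa

lemma tvalid_sub {T T' : PTree S Q} (hT : g.TValid T) (hs : PTree.Sub T' T) : g.TValid T' := by
  induction hs with
  | refl => exact hT
  | one d hs ih => cases hT with | one hd ht htgt => exact ih ht
  | two_l d t₂ hs ih => cases hT with | two hd ht₁ ht₂ htgt => exact ih ht₁
  | two_r d t₁ hs ih => cases hT with | two hd ht₁ ht₂ htgt => exact ih ht₂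

lemma cnt_mem {T : PTree S Q} (hT : g.TValid T) {e : CTrans S Q} (he : 0 < T.cnt e) :
    e ∈ g.delta := by
  induction hT with
  | @leaf d hd htgt =>
    rw [PTree.cnt_leaf] at he
    by_cases hed : e = d
    · exact hed ▸ hd
    · simp [hed] at he
  | @one d t hd ht htgt ih =>
    rw [PTree.cnt_one] at he
    by_cases hed : e = d
    · exact hed ▸ hd
    · simp only [if_neg hed] at he
      exact ih (by omega)
  | @two d t₁ t₂ hd ht₁ ht₂ htgt ih₁ ih₂ =>
    rw [PTree.cnt_two] at he
    by_cases hed : e = d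
    · exact hed ▸ hd
    · simp only [if_neg hed] at he
      rcases Nat.eq_zero_or_pos (t₁.cnt e) with h0 | h0
      · exact ih₂ (by omega)
      · exact ih₁ h0

lemma src_cnt_one {d : CTrans S Q} (hd : d ∈ g.delta) (t : PTree S Q) (q : Q) :
    g.srcCount (PTree.one d t).cnt q = (if d.src = q then 1 else 0) + g.srcCount t.cnt q := by
  rw [g.srcCount_split (f₁ := fun e => if e = d then 1 else 0) (f₂ := t.cnt)
    (fun e => by rw [PTree.cnt_one]) q, g.srcCount_single hd q]

lemma tgt_cnt_one {d : CTrans S Q} (hd : d ∈ g.delta) (t : PTree S Q) (q : Q) :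
    g.tgtCount (PTree.one d t).cnt q = d.tgt q + g.tgtCount t.cnt q := by
  rw [g.tgtCount_split (f₁ := fun e => if e = d then 1 else 0) (f₂ := t.cnt)
    (fun e => by rw [PTree.cnt_one]) q, g.tgtCount_single hd q]

lemma src_cnt_two {d : CTrans S Q} (hd : d ∈ g.delta) (t₁ t₂ : PTree S Q) (q : Q) :
    g.srcCount (PTree.two d t₁ t₂).cnt q =
      (if d.src = q then 1 else 0) + (g.srcCount t₁.cnt q + g.srcCount t₂.cnt q) := by
  rw [g.srcCount_split (f₁ := fun e => if e = d then 1 else 0)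
    (f₂ := fun e => t₁.cnt e + t₂.cnt e)
    (fun e => by simp only [PTree.cnt_two]; omega) q, g.srcCount_single hd q,
    g.srcCount_add t₁.cnt t₂.cnt q]

lemma tgt_cnt_two {d : CTrans S Q} (hd : d ∈ g.delta) (t₁ t₂ : PTree S Q) (q : Q) :
    g.tgtCount (PTree.two d t₁ t₂).cnt q =
      d.tgt q + (g.tgtCount t₁.cnt q + g.tgtCount t₂.cnt q) := by
  rw [g.tgtCount_split (f₁ := fun e => if e = d then 1 else 0)
    (f₂ := fun e => t₁.cnt e + t₂.cnt e)
    (fun e => by simp only [PTree.cnt_two]; omega) q, g.tgtCount_single hd q,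
    g.tgtCount_add t₁.cnt t₂.cnt q]

lemma tvalid_run {T : PTree S Q} (hT : g.TValid T) : g.IsRun T.cnt T.root := by
  induction hT with
  | @leaf d hd htgt =>
    refine ⟨?_, ?_, ?_⟩
    · intro e he
      rw [PTree.cnt_leaf] at he
      by_cases hed : e = d
      · exact hed ▸ hd
      · simp [hed] at he
    · intro q
      have h1 : g.srcCount (PTree.leaf d).cnt q = if d.src = q then 1 else 0 :=
        g.srcCount_single hd q
      rw [ite_eq_ind] at h1
      have h2 : g.tgtCount (PTree.leaf d).cnt q = d.tgt q := g.tgtCount_single hd q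
      have h3 := htgt q
      simp only [PTree.root_leaf, Pi.zero_apply]
      omega
    · intro q hq
      obtain ⟨e, he, hpos, hsrc⟩ := g.pos_of_srcCount hq
      rw [PTree.cnt_leaf] at hpos
      by_cases hed : e = d
      · refine ⟨(PTree.leaf d).root, by simp [ind], ?_⟩
        have hdq : d.src = q := by rw [← hed, hsrc]
        rw [PTree.root_leaf, hdq]
      · simp [hed] at hpos
  | @one d t hd ht htgt ih =>
    refine ⟨?_, ?_, ?_⟩
    · intro e he
      rw [PTree.cnt_one] at he
      by_cases hed : e = d
      · exact hed ▸ hd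
      · simp only [if_neg hed] at he
        exact ih.1 e (by omega)
    · intro q
      have h1 := g.src_cnt_one hd t q
      rw [ite_eq_ind] at h1
      have h2 := g.tgt_cnt_one hd t q
      have e3 := ih.2.1 q
      have e4 := htgt q
      simp only [PTree.root_one, Pi.zero_apply] at e3 ⊢
      omega
    · intro q hq
      rw [g.src_cnt_one hd t q] at hq
      by_cases hds : d.src = q
      · refine ⟨(PTree.one d t).root, by simp [ind], ?_⟩
        rw [PTree.root_one, hds]
      · simp only [if_neg hds] at hq
        obtain ⟨p, hp, hpath⟩ := ih.2.2 q (by omega)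
        have hpt : p = t.root := by
          by_contra hne
          simp [ind, hne] at hp
        subst hpt
        refine ⟨(PTree.one d t).root, by simp [ind], ?_⟩
        refine Relation.ReflTransGen.head ?_
          (g.reach_mono (fun e => by rw [PTree.cnt_one]; omega) hpath)
        refine ⟨d, hd, ?_, by simp, by rw [htgt t.root]; simp [ind]⟩
        exact lt_of_lt_of_le Nat.zero_lt_one
          (by simpa using PTree.cnt_trans_pos (PTree.one d t))
  | @two d t₁ t₂ hd ht₁ ht₂ htgt ih₁ ih₂ =>
    refine ⟨?_, ?_, ?_⟩
    · intro e he
      rw [PTree.cnt_two] at he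
      by_cases hed : e = d
      · exact hed ▸ hd
      · simp only [if_neg hed] at he
        rcases Nat.eq_zero_or_pos (t₁.cnt e) with h0 | h0
        · exact ih₂.1 e (by omega)
        · exact ih₁.1 e h0
    · intro q
      have h1 := g.src_cnt_two hd t₁ t₂ q
      rw [ite_eq_ind] at h1
      have h2 := g.tgt_cnt_two hd t₁ t₂ q
      have e3 := ih₁.2.1 q
      have e3' := ih₂.2.1 q
      have e4 := htgt q
      simp only [PTree.root_two, Pi.zero_apply] at e3 e3' ⊢
      omega
    · intro q hq
      rw [g.src_cnt_two hd t₁ t₂ q] at hq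
      by_cases hds : d.src = q
      · refine ⟨(PTree.two d t₁ t₂).root, by simp [ind], ?_⟩
        rw [PTree.root_two, hds]
      · simp only [if_neg hds] at hq
        have hcase : 0 < g.srcCount t₁.cnt q ∨ 0 < g.srcCount t₂.cnt q := by omega
        refine ⟨(PTree.two d t₁ t₂).root, by simp [ind], ?_⟩
        have hcpos : 0 < (PTree.two d t₁ t₂).cnt d :=
          lt_of_lt_of_le Nat.zero_lt_one
            (by simpa using PTree.cnt_trans_pos (PTree.two d t₁ t₂))
        rcases hcase with hc | hc
        · obtain ⟨p, hp, hpath⟩ := ih₁.2.2 q hc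
          have hpt : p = t₁.root := by
            by_contra hne
            simp [ind, hne] at hp
          subst hpt
          refine Relation.ReflTransGen.head ?_
            (g.reach_mono (fun e => by rw [PTree.cnt_two]; omega) hpath)
          refine ⟨d, hd, hcpos, by simp, ?_⟩
          rw [htgt t₁.root]
          have : ind t₁.root t₁.root = 1 := by simp [ind]
          omega
        · obtain ⟨p, hp, hpath⟩ := ih₂.2.2 q hc
          have hpt : p = t₂.root := by
            by_contra hne
            simp [ind, hne] at hp
          subst hpt
          refine Relation.ReflTransGen.head ?_
            (g.reach_mono (fun e => by rw [PTree.cnt_two]; omega) hpath)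
          refine ⟨d, hd, hcpos, by simp, ?_⟩
          rw [htgt t₂.root]
          have : ind t₂.root t₂.root = 1 := by simp [ind]
          omega

end CGrammar
namespace CGrammar

variable {S Q : Type} [Fintype S] [Fintype Q] [DecidableEq S] [DecidableEq Q]
variable (g : CGrammar S Q)

lemma srcCount_self_sub (T : PTree S Q) (q : Q) :
    g.srcCount (fun e => T.cnt e - T.cnt e) q = 0 := by
  rw [g.srcCount_congr (h := fun _ => 0) (fun e => Nat.sub_self (T.cnt e)) q]
  exact g.srcCount_zero q

lemma conn_diff : ∀ (T : PTree S Q) {T' : PTree S Q}, PTree.Sub T' T → g.TValid T →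
    ∀ q, 0 < g.srcCount (fun e => T.cnt e - T'.cnt e) q →
      Relation.ReflTransGen (g.Step (fun e => T.cnt e - T'.cnt e)) T.root q := by
  intro T
  induction T with
  | leaf d =>
    intro T' hs hT q hq
    cases hs
    rw [g.srcCount_self_sub] at hq
    omega
  | one d t ih =>
    intro T' hs hT q hq
    cases hs with
    | refl =>
      rw [g.srcCount_self_sub] at hq
      omega
    | one _ hsub =>
      cases hT with
      | one hd ht htgt =>
        have hle := PTree.cnt_le_of_sub hsub
        have hdec : ∀ e, (PTree.one d t).cnt e - T'.cnt e =
            (if e = d then 1 else 0) + (t.cnt e - T'.cnt e) := fun e => by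
          rw [PTree.cnt_one]; have := hle e; omega
        have h1 : g.srcCount (fun e => (PTree.one d t).cnt e - T'.cnt e) q =
            (if d.src = q then 1 else 0) + g.srcCount (fun e => t.cnt e - T'.cnt e) q := by
          rw [g.srcCount_split (f₁ := fun e => if e = d then 1 else 0)
            (f₂ := fun e => t.cnt e - T'.cnt e) hdec q, g.srcCount_single hd q]
        rw [h1] at hq
        have hDd : 0 < (PTree.one d t).cnt d - T'.cnt d := by
          have hh := hdec d; rw [if_pos rfl] at hh; omega
        by_cases hds : d.src = q
        · rw [PTree.root_one, hds]
        · simp only [if_neg hds, zero_add] at hq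
          have hpath := ih hsub ht q hq
          refine Relation.ReflTransGen.head ?_
            (g.reach_mono (fun e => by have := hdec e; omega) hpath)
          refine ⟨d, hd, hDd, by simp, ?_⟩
          rw [htgt t.root]
          simp [ind]
  | two d t₁ t₂ ih₁ ih₂ =>
    intro T' hs hT q hq
    cases hT with
    | two hd ht₁ ht₂ htgt =>
      have hstep1 : 0 < (PTree.two d t₁ t₂).cnt d - T'.cnt d →
          g.Step (fun e => (PTree.two d t₁ t₂).cnt e - T'.cnt e)
          (PTree.two d t₁ t₂).root t₁.root := by
        intro hDd
        refine ⟨d, hd, hDd, by simp, ?_⟩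
        rw [htgt t₁.root]
        have : ind t₁.root t₁.root = 1 := by simp [ind]
        omega
      have hstep2 : 0 < (PTree.two d t₁ t₂).cnt d - T'.cnt d →
          g.Step (fun e => (PTree.two d t₁ t₂).cnt e - T'.cnt e)
          (PTree.two d t₁ t₂).root t₂.root := by
        intro hDd
        refine ⟨d, hd, hDd, by simp, ?_⟩
        rw [htgt t₂.root]
        have : ind t₂.root t₂.root = 1 := by simp [ind]
        omega
      cases hs with
      | refl =>
        rw [g.srcCount_self_sub] at hq
        omega
      | two_l _ _ hsub =>
        have hle := PTree.cnt_le_of_sub hsub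
        have hdec : ∀ e, (PTree.two d t₁ t₂).cnt e - T'.cnt e =
            (if e = d then 1 else 0) + ((t₁.cnt e - T'.cnt e) + t₂.cnt e) := fun e => by
          rw [PTree.cnt_two]; have := hle e; omega
        have h1 : g.srcCount (fun e => (PTree.two d t₁ t₂).cnt e - T'.cnt e) q =
            (if d.src = q then 1 else 0) +
              (g.srcCount (fun e => t₁.cnt e - T'.cnt e) q + g.srcCount t₂.cnt q) := by
          rw [g.srcCount_split (f₁ := fun e => if e = d then 1 else 0)
            (f₂ := fun e => (t₁.cnt e - T'.cnt e) + t₂.cnt e) hdec q, g.srcCount_single hd q,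
            g.srcCount_add (fun e => t₁.cnt e - T'.cnt e) t₂.cnt q]
        rw [h1] at hq
        have hDd : 0 < (PTree.two d t₁ t₂).cnt d - T'.cnt d := by
          have hh := hdec d; rw [if_pos rfl] at hh; omega
        by_cases hds : d.src = q
        · rw [PTree.root_two, hds]
        · simp only [if_neg hds, zero_add] at hq
          rcases Nat.eq_zero_or_pos (g.srcCount (fun e => t₁.cnt e - T'.cnt e) q) with h0 | h0
          · have hc : 0 < g.srcCount t₂.cnt q := by omega
            obtain ⟨p, hp, hpath⟩ := (g.tvalid_run ht₂).2.2 q hc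
            have hpt : p = t₂.root := by
              by_contra hne
              simp [ind, hne] at hp
            subst hpt
            exact Relation.ReflTransGen.head (hstep2 hDd)
              (g.reach_mono (fun e => by have := hdec e; omega) hpath)
          · have hpath := ih₁ hsub ht₁ q h0
            exact Relation.ReflTransGen.head (hstep1 hDd)
              (g.reach_mono (fun e => by have := hdec e; omega) hpath)
      | two_r _ _ hsub =>
        have hle := PTree.cnt_le_of_sub hsub
        have hdec : ∀ e, (PTree.two d t₁ t₂).cnt e - T'.cnt e =
            (if e = d then 1 else 0) + ((t₂.cnt e - T'.cnt e) + t₁.cnt e) := fun e => by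
          rw [PTree.cnt_two]; have := hle e; omega
        have h1 : g.srcCount (fun e => (PTree.two d t₁ t₂).cnt e - T'.cnt e) q =
            (if d.src = q then 1 else 0) +
              (g.srcCount (fun e => t₂.cnt e - T'.cnt e) q + g.srcCount t₁.cnt q) := by
          rw [g.srcCount_split (f₁ := fun e => if e = d then 1 else 0)
            (f₂ := fun e => (t₂.cnt e - T'.cnt e) + t₁.cnt e) hdec q, g.srcCount_single hd q,
            g.srcCount_add (fun e => t₂.cnt e - T'.cnt e) t₁.cnt q]
        rw [h1] at hq
        have hDd : 0 < (PTree.two d t₁ t₂).cnt d - T'.cnt d := by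
          have hh := hdec d; rw [if_pos rfl] at hh; omega
        by_cases hds : d.src = q
        · rw [PTree.root_two, hds]
        · simp only [if_neg hds, zero_add] at hq
          rcases Nat.eq_zero_or_pos (g.srcCount (fun e => t₂.cnt e - T'.cnt e) q) with h0 | h0
          · have hc : 0 < g.srcCount t₁.cnt q := by omega
            obtain ⟨p, hp, hpath⟩ := (g.tvalid_run ht₁).2.2 q hc
            have hpt : p = t₁.root := by
              by_contra hne
              simp [ind, hne] at hp
            subst hpt
            exact Relation.ReflTransGen.head (hstep1 hDd)
              (g.reach_mono (fun e => by have := hdec e; omega) hpath)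
          · have hpath := ih₂ hsub ht₂ q h0
            exact Relation.ReflTransGen.head (hstep2 hDd)
              (g.reach_mono (fun e => by have := hdec e; omega) hpath)

lemma graft : ∀ (T : PTree S Q), g.TValid T → ∀ (i : ℕ) (h : i < T.spine.length)
    (Tn : PTree S Q), g.TValid Tn → Tn.root = (T.spine[i]).root →
    ∃ T'', g.TValid T'' ∧ T''.root = T.root ∧
      ∀ e, T''.cnt e + (T.spine[i]).cnt e = T.cnt e + Tn.cnt e := by
  intro T
  induction T with
  | leaf d =>
    intro hT i h Tn hTn hroot
    simp [PTree.spine] at h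
    subst h
    rw [PTree.spine_getElem_zero] at hroot ⊢
    exact ⟨Tn, hTn, hroot, fun e => by omega⟩
  | one d t ih =>
    intro hT i h Tn hTn hroot
    cases i with
    | zero =>
      rw [PTree.spine_getElem_zero] at hroot ⊢
      exact ⟨Tn, hTn, hroot, fun e => by omega⟩
    | succ j =>
      cases hT with
      | one hd ht htgt =>
        simp only [PTree.spine, List.length_cons] at h
        have hj : j < t.spine.length := by omega
        have h1 : (PTree.one d t).spine[j+1] = t.spine[j] := by
          simp only [PTree.spine]; rw [List.getElem_cons_succ]
        rw [h1] at hroot ⊢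
        obtain ⟨t'', ht'', hroot'', heq⟩ := ih ht j hj Tn hTn hroot
        refine ⟨.one d t'', TValid.one hd ht'' (fun q => by rw [htgt q, hroot'']),
          by simp, fun e => ?_⟩
        have := heq e
        simp only [PTree.cnt_one]
        omega
  | two d t₁ t₂ ih₁ ih₂ =>
    intro hT i h Tn hTn hroot
    cases i with
    | zero =>
      rw [PTree.spine_getElem_zero] at hroot ⊢
      exact ⟨Tn, hTn, hroot, fun e => by omega⟩
    | succ j =>
      cases hT with
      | two hd ht₁ ht₂ htgt =>
        by_cases hc : t₂.nodes ≤ t₁.nodes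
        · have hlen : (PTree.two d t₁ t₂).spine = (PTree.two d t₁ t₂) :: t₁.spine := by
            simp only [PTree.spine, if_pos hc]
          have h' : j + 1 < ((PTree.two d t₁ t₂) :: t₁.spine).length := by rw [← hlen]; exact h
          have hj : j < t₁.spine.length := by
            simp only [List.length_cons] at h'; omega
          have h1 : (PTree.two d t₁ t₂).spine[j+1]'h = t₁.spine[j] := by
            simp only [hlen]; rw [List.getElem_cons_succ]
          rw [h1] at hroot ⊢
          obtain ⟨t'', ht'', hroot'', heq⟩ := ih₁ ht₁ j hj Tn hTn hroot
          refine ⟨.two d t'' t₂, TValid.two hd ht'' ht₂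
            (fun q => by rw [htgt q, hroot'']), by simp, fun e => ?_⟩
          have := heq e
          simp only [PTree.cnt_two]
          omega
        · have hlen : (PTree.two d t₁ t₂).spine = (PTree.two d t₁ t₂) :: t₂.spine := by
            simp only [PTree.spine, if_neg hc]
          have h' : j + 1 < ((PTree.two d t₁ t₂) :: t₂.spine).length := by rw [← hlen]; exact h
          have hj : j < t₂.spine.length := by
            simp only [List.length_cons] at h'; omega
          have h1 : (PTree.two d t₁ t₂).spine[j+1]'h = t₂.spine[j] := by
            simp only [hlen]; rw [List.getElem_cons_succ]
          rw [h1] at hroot ⊢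
          obtain ⟨t'', ht'', hroot'', heq⟩ := ih₂ ht₂ j hj Tn hTn hroot
          refine ⟨.two d t₁ t'', TValid.two hd ht₁ ht''
            (fun q => by rw [htgt q, hroot'']), by simp, fun e => ?_⟩
          have := heq e
          simp only [PTree.cnt_two]
          omega

lemma nodes_le_regular (hreg : g.Regular) {T : PTree S Q} (hT : g.TValid T) :
    T.nodes ≤ T.spine.length := by
  induction hT with
  | leaf hd htgt => simp [PTree.nodes, PTree.spine]
  | @one d t hd ht htgt ih =>
    simp only [PTree.nodes, PTree.spine, List.length_cons]; omega
  | @two d t₁ t₂ hd ht₁ ht₂ htgt ih₁ ih₂ =>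
    exfalso
    have h1 := (hreg d hd).1
    have h2 : ∑ q, d.tgt q = 2 := by
      rw [Finset.sum_congr rfl (fun q _ => htgt q), Finset.sum_add_distrib,
        sum_ind, sum_ind]
    omega

lemma nodes_eq_size {T : PTree S Q} (hT : g.TValid T) : g.size T.cnt = T.nodes := by
  induction hT with
  | @leaf d hd htgt =>
    have h1 : g.size (PTree.leaf d).cnt = g.size (fun e => if e = d then 1 else 0) :=
      g.size_congr (fun e => PTree.cnt_leaf d e)
    rw [h1, g.size_single hd]
    rfl
  | @one d t hd ht htgt ih =>
    have h1 : g.size (PTree.one d t).cnt =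
        g.size (fun e => if e = d then 1 else 0) + g.size t.cnt := by
      rw [g.size_congr (fun e => PTree.cnt_one d t e)]
      exact g.size_add _ _
    rw [h1, g.size_single hd, ih]
    rfl
  | @two d t₁ t₂ hd ht₁ ht₂ htgt ih₁ ih₂ =>
    have h1 : g.size (PTree.two d t₁ t₂).cnt =
        g.size (fun e => (if e = d then 1 else 0) + t₁.cnt e) + g.size t₂.cnt := by
      rw [g.size_congr (fun e => PTree.cnt_two d t₁ t₂ e)]
      exact g.size_add _ _
    have h2 : g.size (fun e => (if e = d then 1 else 0) + t₁.cnt e) =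
        g.size (fun e => if e = d then 1 else 0) + g.size t₁.cnt := g.size_add _ _
    rw [h1, h2, g.size_single hd, ih₁, ih₂]
    rfl

end CGrammar
namespace CGrammar

variable {S Q : Type} [Fintype S] [Fintype Q] [DecidableEq S] [DecidableEq Q]
variable (g : CGrammar S Q)

def total (F : Q → List (PTree S Q)) (e : CTrans S Q) : ℕ :=
  ∑ q, ((F q).map (fun T => PTree.cnt T e)).sum

lemma total_split (F : Q → List (PTree S Q)) (a : Q) (e : CTrans S Q) :
    total F e = ((F a).map (fun T => PTree.cnt T e)).sum +
      ∑ q ∈ Finset.univ.erase a, ((F q).map (fun T => PTree.cnt T e)).sum := by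
  unfold total
  rw [← Finset.add_sum_erase _ _ (Finset.mem_univ a)]

lemma total_update_split (F : Q → List (PTree S Q)) (a : Q) (L : List (PTree S Q))
    (e : CTrans S Q) :
    total (Function.update F a L) e = (L.map (fun T => PTree.cnt T e)).sum +
      ∑ q ∈ Finset.univ.erase a, ((F q).map (fun T => PTree.cnt T e)).sum := by
  rw [total_split (Function.update F a L) a e, Function.update_self]
  congr 1
  exact Finset.sum_congr rfl fun q hq => by
    rw [Function.update_of_ne (Finset.ne_of_mem_erase hq)]

lemma sum_eq_zero' {f : Q → ℕ} (h : ∑ q, f q = 0) : ∀ q, f q = 0 :=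
  fun q => (Finset.sum_eq_zero_iff).1 h q (Finset.mem_univ q)

lemma exists_pos_of_sum {f : Q → ℕ} {c : ℕ} (h : ∑ q, f q = c) (hc : 0 < c) :
    ∃ a, 0 < f a := by
  by_contra hcon
  push_neg at hcon
  have : ∑ q, f q = 0 := Finset.sum_eq_zero fun q _ => by have := hcon q; omega
  omega

lemma sum_eq_ind {f : Q → ℕ} (h : ∑ q, f q = 1) : ∃ a, ∀ q, f q = ind a q := by
  obtain ⟨a, ha⟩ := exists_pos_of_sum h Nat.one_pos
  have hsplit : f a + ∑ q ∈ Finset.univ.erase a, f q = 1 := by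
    rw [Finset.add_sum_erase _ f (Finset.mem_univ a)]; exact h
  have h0 : ∑ q ∈ Finset.univ.erase a, f q = 0 := by omega
  refine ⟨a, fun q => ?_⟩
  by_cases hq : q = a
  · subst hq; unfold ind; rw [if_pos rfl]; omega
  · unfold ind; rw [if_neg hq]
    exact (Finset.sum_eq_zero_iff).1 h0 q (Finset.mem_erase.2 ⟨hq, Finset.mem_univ q⟩)

lemma sum_eq_ind₂ {f : Q → ℕ} (h : ∑ q, f q = 2) :
    ∃ a b, ∀ q, f q = ind a q + ind b q := by
  obtain ⟨a, ha⟩ := exists_pos_of_sum h Nat.zero_lt_two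
  have hpt : ∀ q, (f q - ind a q) + ind a q = f q := fun q => by
    unfold ind
    by_cases hq : q = a
    · subst hq; rw [if_pos rfl]; omega
    · rw [if_neg hq]; omega
  have h1 : ∑ q, (f q - ind a q) = 1 := by
    have h2 : ∑ q, ((f q - ind a q) + ind a q) = 2 := by
      rw [Finset.sum_congr rfl fun q _ => hpt q]; exact h
    rw [Finset.sum_add_distrib, sum_ind] at h2
    omega
  obtain ⟨b, hb⟩ := sum_eq_ind h1
  refine ⟨a, b, fun q => ?_⟩
  have hb' := hb q
  have hp := hpt q
  omega

lemma subrun_tree_zero {R : CTrans S Q → ℕ} {m : Q → ℕ} (hsz : g.size R = 0)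
    (hsub : g.IsSubrun R m 0) :
    ∃ F : Q → List (PTree S Q),
      (∀ q, ∀ T ∈ F q, g.TValid T ∧ T.root = q) ∧
      (∀ q, (F q).length = m q) ∧
      (∀ e, R e = total F e) := by
  have hR0 : ∀ e, R e = 0 := by
    intro e
    by_cases he : e ∈ g.delta
    · exact (Finset.sum_eq_zero_iff).1 hsz e he
    · by_contra hc
      exact he (hsub.1 e (Nat.pos_of_ne_zero hc))
  have hm0 : ∀ q, m q = 0 := by
    intro q
    have h1 : g.srcCount R q = 0 := by
      rw [g.srcCount_congr (h := fun _ => 0) hR0 q]; exact g.srcCount_zero q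
    have e3 := hsub.2.1 q
    simp only [Pi.zero_apply] at e3
    omega
  refine ⟨fun _ => [], ?_, ?_, ?_⟩
  · intro q T hT
    exact absurd hT List.not_mem_nil
  · intro q
    rw [hm0 q]
    rfl
  · intro e
    rw [hR0 e]
    simp [total]

lemma subrun_tree (hg : g.NormalForm) :
    ∀ (n : ℕ) (R : CTrans S Q → ℕ) (m : Q → ℕ), g.size R ≤ n → g.IsSubrun R m 0 →
    ∃ F : Q → List (PTree S Q),
      (∀ q, ∀ T ∈ F q, g.TValid T ∧ T.root = q) ∧
      (∀ q, (F q).length = m q) ∧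
      (∀ e, R e = total F e) := by
  intro n
  induction n with
  | zero =>
    intro R m hsz hsub
    exact g.subrun_tree_zero (by omega) hsub
  | succ n ih =>
    intro R m hsz hsub
    rcases Nat.eq_zero_or_pos (g.size R) with h0 | hpos
    · exact g.subrun_tree_zero h0 hsub
    · have hne : ∃ d ∈ g.delta, 0 < R d := by
        by_contra hcon
        push_neg at hcon
        have : g.size R = 0 := Finset.sum_eq_zero fun d hd => by have := hcon d hd; omega
        omega
      obtain ⟨d, hd, hRd, hmd, hsub'⟩ := g.select hsub hne
      have hpt : ∀ e, R e = (R e - if e = d then 1 else 0) + (if e = d then 1 else 0) :=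
        fun e => by by_cases he : e = d <;> simp [he] <;> omega
      have hsz' : g.size (fun e => R e - if e = d then 1 else 0) + 1 = g.size R := by
        calc g.size (fun e => R e - if e = d then 1 else 0) + 1
            = g.size (fun e => R e - if e = d then 1 else 0) +
              g.size (fun e => if e = d then 1 else 0) := by rw [g.size_single hd]
          _ = g.size (fun e => (R e - if e = d then 1 else 0) + (if e = d then 1 else 0)) :=
              (g.size_add _ _).symm
          _ = g.size R := (g.size_congr hpt).symm
      obtain ⟨F', hFv, hFlen, hFcnt⟩ := ih (fun e => R e - if e = d then 1 else 0)
        (fun q => m q - ind d.src q + d.tgt q) (by omega) hsub'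
      have hc2 : ∑ q, d.tgt q ≤ 2 := (hg d hd).1
      have hiaa : ∀ a : Q, ind a a = 1 := fun a => by unfold ind; rw [if_pos rfl]
      have hianq : ∀ a q : Q, q ≠ a → ind a q = 0 := fun a q hq => by
        unfold ind; rw [if_neg hq]
      interval_cases hcv : (∑ q, d.tgt q)
      · -- no children
        have htgt0 : ∀ q, d.tgt q = 0 := sum_eq_zero' hcv
        refine ⟨Function.update F' d.src (PTree.leaf d :: F' d.src), ?_, ?_, ?_⟩
        · intro q T hT
          by_cases hq : q = d.src
          · subst hq
            rw [Function.update_self] at hT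
            rcases List.mem_cons.1 hT with h | h
            · subst h
              exact ⟨TValid.leaf hd htgt0, by simp⟩
            · exact hFv d.src T h
          · rw [Function.update_of_ne hq] at hT
            exact hFv q T hT
        · intro q
          by_cases hq : q = d.src
          · subst hq
            rw [Function.update_self]
            have hl := hFlen d.src
            have := hiaa d.src
            have := htgt0 d.src
            simp only [List.length_cons]
            omega
          · rw [Function.update_of_ne hq]
            have hl := hFlen q
            have := hianq d.src q hq
            have := htgt0 q
            omega
        · intro e
          have h1 := total_update_split F' d.src (PTree.leaf d :: F' d.src) e
          have h2 := total_split F' d.src e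
          have h3 := hFcnt e
          have h4 := hpt e
          rw [h1]
          simp only [List.map_cons, List.sum_cons, PTree.cnt_leaf]
          omega
      · -- one child
        obtain ⟨a, hta⟩ := sum_eq_ind hcv
        have h1a : d.tgt a = 1 := by rw [hta a, hiaa a]
        have hlen_a := hFlen a
        have hne_a : F' a ≠ [] := by
          intro hnil
          rw [hnil] at hlen_a
          simp only [List.length_nil] at hlen_a
          omega
        obtain ⟨Ta, ta, hta_eq⟩ := List.exists_cons_of_ne_nil hne_a
        have hTa := hFv a Ta (by rw [hta_eq]; exact List.mem_cons_self)
        have hnewv : g.TValid (PTree.one d Ta) :=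
          TValid.one hd hTa.1 (fun q => by rw [hTa.2]; exact hta q)
        have hGv : ∀ q, ∀ T ∈ Function.update F' a ta q, g.TValid T ∧ T.root = q := by
          intro q T hT
          by_cases hq : q = a
          · rw [hq] at hT ⊢
            rw [Function.update_self] at hT
            exact hFv a T (by rw [hta_eq]; exact List.mem_cons_of_mem Ta hT)
          · rw [Function.update_of_ne hq] at hT
            exact hFv q T hT
        have hGlen : ∀ q, (Function.update F' a ta q).length =
            m q - ind d.src q + d.tgt q - ind a q := by
          intro q
          by_cases hq : q = a
          · rw [hq]
            rw [Function.update_self]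
            have h5 : (F' a).length = ta.length + 1 := by rw [hta_eq]; rfl
            have := hiaa a
            omega
          · rw [Function.update_of_ne hq, hFlen q, hianq a q hq]
            omega
        have hGtot : ∀ e, total (Function.update F' a ta) e + Ta.cnt e = total F' e := by
          intro e
          have h1 := total_update_split F' a ta e
          have h2 := total_split F' a e
          rw [hta_eq] at h2
          simp only [List.map_cons, List.sum_cons] at h2
          omega
        refine ⟨Function.update (Function.update F' a ta) d.src
          (PTree.one d Ta :: Function.update F' a ta d.src), ?_, ?_, ?_⟩
        · intro q T hT
          by_cases hq : q = d.src
          · subst hq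
            rw [Function.update_self] at hT
            rcases List.mem_cons.1 hT with h | h
            · subst h
              exact ⟨hnewv, by simp⟩
            · exact hGv d.src T h
          · rw [Function.update_of_ne hq] at hT
            exact hGv q T hT
        · intro q
          by_cases hq : q = d.src
          · subst hq
            rw [Function.update_self]
            have hl := hGlen d.src
            have h6 := hta d.src
            have h7 : ind a d.src ≤ m d.src - ind d.src d.src + d.tgt d.src := by
              rw [h6]; omega
            have := hiaa d.src
            simp only [List.length_cons]
            omega
          · rw [Function.update_of_ne hq]
            have hl := hGlen q
            have h6 := hta q
            have := hianq d.src q hq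
            omega
        · intro e
          have h1 := total_update_split (Function.update F' a ta) d.src
            (PTree.one d Ta :: Function.update F' a ta d.src) e
          have h2 := total_split (Function.update F' a ta) d.src e
          have h3 := hFcnt e
          have h4 := hpt e
          have h5 := hGtot e
          rw [h1]
          simp only [List.map_cons, List.sum_cons, PTree.cnt_one]
          omega
      · -- two children
        obtain ⟨a, b, htab⟩ := sum_eq_ind₂ hcv
        have h1a : 0 < d.tgt a := by
          rw [htab a, hiaa a]; omega
        have hlen_a := hFlen a
        have hne_a : F' a ≠ [] := by
          intro hnil
          rw [hnil] at hlen_a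
          simp only [List.length_nil] at hlen_a
          omega
        obtain ⟨Ta, ta, hta_eq⟩ := List.exists_cons_of_ne_nil hne_a
        have hTa := hFv a Ta (by rw [hta_eq]; exact List.mem_cons_self)
        have hG1v : ∀ q, ∀ T ∈ Function.update F' a ta q, g.TValid T ∧ T.root = q := by
          intro q T hT
          by_cases hq : q = a
          · rw [hq] at hT ⊢
            rw [Function.update_self] at hT
            exact hFv a T (by rw [hta_eq]; exact List.mem_cons_of_mem Ta hT)
          · rw [Function.update_of_ne hq] at hT
            exact hFv q T hT
        have hG1len : ∀ q, (Function.update F' a ta q).length =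
            m q - ind d.src q + d.tgt q - ind a q := by
          intro q
          by_cases hq : q = a
          · rw [hq]
            rw [Function.update_self]
            have h5 : (F' a).length = ta.length + 1 := by rw [hta_eq]; rfl
            have := hiaa a
            omega
          · rw [Function.update_of_ne hq, hFlen q, hianq a q hq]
            omega
        have hG1tot : ∀ e, total (Function.update F' a ta) e + Ta.cnt e = total F' e := by
          intro e
          have h1 := total_update_split F' a ta e
          have h2 := total_split F' a e
          rw [hta_eq] at h2
          simp only [List.map_cons, List.sum_cons] at h2
          omega
        have hlen_b := hG1len b
        have hne_b : Function.update F' a ta b ≠ [] := by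
          intro hnil
          rw [hnil] at hlen_b
          simp only [List.length_nil] at hlen_b
          have h6 := htab b
          have := hiaa b
          have h7 : ind a b ≤ m b - ind d.src b + d.tgt b := by
            rw [h6]; omega
          omega
        obtain ⟨Tb, tb, htb_eq⟩ := List.exists_cons_of_ne_nil hne_b
        have hTb := hG1v b Tb (by rw [htb_eq]; exact List.mem_cons_self)
        have hnewv : g.TValid (PTree.two d Ta Tb) :=
          TValid.two hd hTa.1 hTb.1 (fun q => by rw [hTa.2, hTb.2]; exact htab q)
        have hG2v : ∀ q, ∀ T ∈ Function.update (Function.update F' a ta) b tb q,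
            g.TValid T ∧ T.root = q := by
          intro q T hT
          by_cases hq : q = b
          · rw [hq] at hT ⊢
            rw [Function.update_self] at hT
            exact hG1v b T (by rw [htb_eq]; exact List.mem_cons_of_mem Tb hT)
          · rw [Function.update_of_ne hq] at hT
            exact hG1v q T hT
        have hG2len : ∀ q, (Function.update (Function.update F' a ta) b tb q).length =
            m q - ind d.src q + d.tgt q - ind a q - ind b q := by
          intro q
          by_cases hq : q = b
          · rw [hq]
            rw [Function.update_self]
            have h5 : (Function.update F' a ta b).length = tb.length + 1 := by
              rw [htb_eq]; rfl
            have := hiaa b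
            omega
          · rw [Function.update_of_ne hq, hG1len q, hianq b q hq]
            omega
        have hG2tot : ∀ e, total (Function.update (Function.update F' a ta) b tb) e +
            Tb.cnt e = total (Function.update F' a ta) e := by
          intro e
          have h1 := total_update_split (Function.update F' a ta) b tb e
          have h2 := total_split (Function.update F' a ta) b e
          rw [htb_eq] at h2
          simp only [List.map_cons, List.sum_cons] at h2
          omega
        refine ⟨Function.update (Function.update (Function.update F' a ta) b tb) d.src
          (PTree.two d Ta Tb :: Function.update (Function.update F' a ta) b tb d.src),
          ?_, ?_, ?_⟩
        · intro q T hT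
          by_cases hq : q = d.src
          · subst hq
            rw [Function.update_self] at hT
            rcases List.mem_cons.1 hT with h | h
            · subst h
              exact ⟨hnewv, by simp⟩
            · exact hG2v d.src T h
          · rw [Function.update_of_ne hq] at hT
            exact hG2v q T hT
        · intro q
          by_cases hq : q = d.src
          · subst hq
            rw [Function.update_self]
            have hl := hG2len d.src
            have h6 := htab d.src
            have := hiaa d.src
            simp only [List.length_cons]
            omega
          · rw [Function.update_of_ne hq]
            have hl := hG2len q
            have h6 := htab q
            have := hianq d.src q hq
            omega
        · intro e
          have h1 := total_update_split (Function.update (Function.update F' a ta) b tb)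
            d.src (PTree.two d Ta Tb ::
              Function.update (Function.update F' a ta) b tb d.src) e
          have h2 := total_split (Function.update (Function.update F' a ta) b tb) d.src e
          have h3 := hFcnt e
          have h4 := hpt e
          have h5 := hG1tot e
          have h6 := hG2tot e
          rw [h1]
          simp only [List.map_cons, List.sum_cons, PTree.cnt_two]
          omega

lemma run_tree (hg : g.NormalForm) (R : CTrans S Q → ℕ) (hR : g.IsRun R g.q0) :
    ∃ T : PTree S Q, g.TValid T ∧ T.root = g.q0 ∧ ∀ e, PTree.cnt T e = R e := by
  obtain ⟨F, hFv, hFlen, hFcnt⟩ := g.subrun_tree hg (g.size R) R (ind g.q0) le_rfl hR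
  have hlen : (F g.q0).length = 1 := by
    rw [hFlen]
    unfold ind
    rw [if_pos rfl]
  obtain ⟨T, hT⟩ := List.length_eq_one_iff.1 hlen
  have hmem : T ∈ F g.q0 := by rw [hT]; exact List.mem_cons_self
  refine ⟨T, (hFv g.q0 T hmem).1, (hFv g.q0 T hmem).2, fun e => ?_⟩
  have h3 := hFcnt e
  have htot : total F e = PTree.cnt T e := by
    rw [total_split F g.q0 e, hT]
    have hzero : ∀ q ∈ Finset.univ.erase g.q0,
        ((F q).map (fun T => PTree.cnt T e)).sum = 0 := by
      intro q hq
      have hq0 : q ≠ g.q0 := (Finset.mem_erase.1 hq).1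
      have hl : (F q).length = 0 := by
        rw [hFlen]
        unfold ind
        rw [if_neg hq0]
      rw [List.length_eq_zero_iff.1 hl]
      rfl
    rw [Finset.sum_eq_zero hzero]
    simp
  omega

end CGrammar
namespace CGrammar

variable {S Q : Type} [Fintype S] [Fintype Q] [DecidableEq S] [DecidableEq Q]

lemma chain_pig {L : ℕ} (x : ℕ → Q) (Sf : ℕ → Finset Q)
    (hx : ∀ i, i < L → x i ∈ Sf i)
    (hmono : ∀ i j, i ≤ j → j < L → Sf i ⊆ Sf j)
    (hL : Fintype.card Q ^ 2 + 1 ≤ L) :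
    ∃ i j, i < j ∧ j < L ∧ x i = x j ∧ Sf i = Sf j := by
  classical
  by_contra hcon
  push_neg at hcon
  set N := Fintype.card Q with hN
  have hNpos : 0 < N := by
    rw [hN]; exact Fintype.card_pos_iff.2 ⟨x 0⟩
  have heqS : ∀ i j, i < L → j < L → (Sf i).card = (Sf j).card → Sf i = Sf j := by
    intro i j hi hj hcard
    rcases le_total i j with hij | hij
    · exact Finset.eq_of_subset_of_card_le (hmono i j hij hj) (le_of_eq hcard.symm)
    · exact (Finset.eq_of_subset_of_card_le (hmono j i hij hi) (le_of_eq hcard)).symm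
  have hinj : ∀ i j, i < L → j < L → x i = x j → (Sf i).card = (Sf j).card → i = j := by
    intro i j hi hj hxx hcc
    rcases lt_trichotomy i j with h | h | h
    · exact absurd (heqS i j hi hj hcc) (hcon i j h hj hxx)
    · exact h
    · exact absurd (heqS j i hj hi hcc.symm) (hcon j i h hi hxx.symm)
  set B : Finset (Q × ℕ) := (Finset.range (N + 1)).biUnion (fun c =>
    (Finset.univ.filter (fun q => ∃ i, i < L ∧ (Sf i).card = c ∧ q ∈ Sf i)).image
      (fun q => (q, c))) with hB
  have hmaps : ∀ i ∈ Finset.range L, (x i, (Sf i).card) ∈ B := by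
    intro i hi
    rw [Finset.mem_range] at hi
    have hcard_le : (Sf i).card ≤ N := by
      rw [hN, ← Finset.card_univ]
      exact Finset.card_le_univ _
    refine Finset.mem_biUnion.2 ⟨(Sf i).card, Finset.mem_range.2 (by omega), ?_⟩
    exact Finset.mem_image.2 ⟨x i,
      Finset.mem_filter.2 ⟨Finset.mem_univ _, ⟨i, hi, rfl, hx i hi⟩⟩, rfl⟩
  have hinj' : Set.InjOn (fun i => (x i, (Sf i).card)) (Finset.range L) := by
    intro i hi j hj hij
    simp only [Finset.coe_range, Set.mem_Iio] at hi hj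
    have h1 : x i = x j := congrArg Prod.fst hij
    have h2 : (Sf i).card = (Sf j).card := congrArg Prod.snd hij
    exact hinj i j hi hj h1 h2
  have hLle : L ≤ B.card := by
    have := Finset.card_le_card_of_injOn (fun i => (x i, (Sf i).card)) hmaps hinj'
    simpa using this
  have hBle : B.card ≤ ∑ c ∈ Finset.range (N + 1), c := by
    rw [hB]
    refine le_trans Finset.card_biUnion_le ?_
    refine Finset.sum_le_sum ?_
    intro c hc
    refine le_trans Finset.card_image_le ?_
    by_cases hcne : (Finset.univ.filter
        (fun q => ∃ i, i < L ∧ (Sf i).card = c ∧ q ∈ Sf i)).Nonempty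
    · obtain ⟨q0, hq0⟩ := hcne
      obtain ⟨-, i0, hi0, hc0, hq0i⟩ := Finset.mem_filter.1 hq0
      have hsubset : (Finset.univ.filter
          (fun q => ∃ i, i < L ∧ (Sf i).card = c ∧ q ∈ Sf i)) ⊆ Sf i0 := by
        intro q hq
        obtain ⟨-, i, hi, hci, hqi⟩ := Finset.mem_filter.1 hq
        rw [heqS i i0 hi hi0 (by rw [hci, hc0])] at hqi
        exact hqi
      calc (Finset.univ.filter
          (fun q => ∃ i, i < L ∧ (Sf i).card = c ∧ q ∈ Sf i)).card
          ≤ (Sf i0).card := Finset.card_le_card hsubset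
        _ = c := hc0
    · rw [Finset.not_nonempty_iff_eq_empty.1 hcne]
      simp
  have hsum : (∑ c ∈ Finset.range (N + 1), c) * 2 = (N + 1) * N := by
    rw [Finset.sum_range_id_mul_two]
    simp
  have hNsq : N ^ 2 = N * N := sq N
  nlinarith [hLle, hBle, hsum, hNpos, hL]

end CGrammar

/-- In a grammar in normal form with `N` nonterminals, every skeleton run `R`
(a run from `q₀` from which no nonzero cycle can be removed while keeping a run
with the same support) satisfies `|R| < γ(N²)`, where `γ(M) = M + 1` if the
grammar is regular and `γ(M) = 2^(M+1)` otherwise. -/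
theorem skeleton_run_size_lt {S Q : Type} [Fintype S] [Fintype Q]
    [DecidableEq S] [DecidableEq Q]
    (g : CGrammar S Q) (hg : g.NormalForm) (R : CTrans S Q → ℕ)
    (hR : g.IsRun R g.q0)
    (hskel : ¬ ∃ (C : CTrans S Q → ℕ) (p : Q),
      g.IsCycle C p ∧ (∃ d, 0 < C d) ∧ (∀ d, C d ≤ R d) ∧
      g.IsRun (fun d => R d - C d) g.q0 ∧
      (∀ q, 0 < g.srcCount (fun d => R d - C d) q ↔ 0 < g.srcCount R q)) :
    (g.Regular → g.size R < Fintype.card Q ^ 2 + 1) ∧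
    g.size R < 2 ^ (Fintype.card Q ^ 2 + 1) := by
  classical
  obtain ⟨T, hTval, hTroot, hTcnt⟩ := g.run_tree hg R hR
  have hRcnt : ∀ e, R e = T.cnt e := fun e => (hTcnt e).symm
  have hsize : g.size R = T.nodes := by
    rw [g.size_congr hRcnt, g.nodes_eq_size hTval]
  have hN1 : 1 ≤ Fintype.card Q := Fintype.card_pos_iff.2 ⟨g.q0⟩
  have key : T.spine.length ≤ Fintype.card Q ^ 2 := by
    by_contra hkey
    push_neg at hkey
    have hkey' : Fintype.card Q ^ 2 + 1 ≤ T.spine.length := hkey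
    set L := T.spine.length with hLdef
    have hLpos : 0 < L := by omega
    set el : ℕ → PTree S Q := fun i => T.spine.getD i T with hel_def
    have hel : ∀ i (h : i < L), el i = T.spine[i] := fun i h =>
      List.getD_eq_getElem T.spine T h
    have hel0 : el 0 = T := by
      rw [hel 0 hLpos, PTree.spine_getElem_zero]
    -- subtree relations along the spine
    have hsub2 : ∀ i j, i ≤ j → j < L → PTree.Sub (el j) (el i) := by
      intro i j hij hj
      have hi : i < L := Nat.lt_of_le_of_lt hij hj
      rw [hel i hi, hel j hj]
      have hd := PTree.spine_drop T i hi
      have hlen : j - i < (T.spine[i]).spine.length := by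
        rw [hd, List.length_drop]; omega
      have heq : (T.spine[i]).spine[j - i] = T.spine[j] := by
        rw [List.getElem_of_eq hd hlen, List.getElem_drop]
        simp only [Nat.add_sub_cancel' hij]
      exact heq ▸ PTree.sub_spine (T.spine[i]) (j - i) hlen
    have hstrict : ∀ i j, i < j → j < L →
        (el j).cnt (el i).trans + 1 ≤ (el i).cnt (el i).trans := by
      intro i j hij hj
      have hi : i < L := Nat.lt_trans hij hj
      rw [hel i hi, hel j hj]
      have hd := PTree.spine_drop T i hi
      have hlen : j - i < (T.spine[i]).spine.length := by
        rw [hd, List.length_drop]; omega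
      have heq : (T.spine[i]).spine[j - i] = T.spine[j] := by
        rw [List.getElem_of_eq hd hlen, List.getElem_drop]
        simp only [Nat.add_sub_cancel' (le_of_lt hij)]
      have := PTree.spine_strict (T.spine[i]) (j - i) hlen (by omega)
      rw [heq] at this
      exact this
    have hvalid : ∀ i, i < L → g.TValid (el i) := by
      intro i hi
      have := hsub2 0 i (Nat.zero_le i) hi
      rw [hel0] at this
      exact g.tvalid_sub hTval this
    have hcnt_le : ∀ i j, i ≤ j → j < L → ∀ e, (el j).cnt e ≤ (el i).cnt e :=
      fun i j hij hj => PTree.cnt_le_of_sub (hsub2 i j hij hj)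
    have hcnt_leT : ∀ i, i < L → ∀ e, (el i).cnt e ≤ T.cnt e := by
      intro i hi e
      have := hcnt_le 0 i (Nat.zero_le i) hi e
      rwa [hel0] at this
    set x : ℕ → Q := fun i => (el i).root with hx_def
    set Sf : ℕ → Finset Q := fun i => insert ((el i).root)
      (Finset.univ.filter (fun q => 0 < g.srcCount (fun e => T.cnt e - (el i).cnt e) q))
      with hSf_def
    have hSfmem : ∀ i q, q ∈ Sf i ↔ (q = (el i).root ∨
        0 < g.srcCount (fun e => T.cnt e - (el i).cnt e) q) := by
      intro i q
      rw [hSf_def]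
      simp [Finset.mem_insert, Finset.mem_filter]
    have hx : ∀ i, i < L → x i ∈ Sf i := by
      intro i hi
      rw [hSfmem]
      exact Or.inl rfl
    have hmono : ∀ i j, i ≤ j → j < L → Sf i ⊆ Sf j := by
      intro i j hij hj
      intro q hq
      rw [hSfmem] at hq
      rw [hSfmem]
      rcases hq with hq | hq
      · rcases Nat.eq_or_lt_of_le hij with heq | hlt
        · subst heq; exact Or.inl hq
        · right
          subst hq
          refine g.srcCount_pos (f := fun e => T.cnt e - (el j).cnt e)
            (d := (el i).trans) (g.trans_mem (hvalid i (Nat.lt_trans hlt hj))) ?_ rfl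
          show 0 < T.cnt (el i).trans - (el j).cnt (el i).trans
          have h1 := hstrict i j hlt hj
          have h2 := hcnt_leT i (Nat.lt_trans hlt hj) (el i).trans
          have h3 := hcnt_le i j hij hj (el i).trans
          omega
      · right
        refine lt_of_lt_of_le hq (g.srcCount_mono ?_ q)
        intro e
        have := hcnt_le i j hij hj e
        omega
    obtain ⟨i, j, hij, hjL, hxeq, hSeq⟩ := CGrammar.chain_pig x Sf hx hmono hkey'
    have hiL : i < L := Nat.lt_trans hij hjL
    have hTuval : g.TValid (el i) := hvalid i hiL
    have hTvval : g.TValid (el j) := hvalid j hjL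
    have hroots : (el j).root = (el i).root := hxeq.symm
    have hvu : ∀ e, (el j).cnt e ≤ (el i).cnt e := hcnt_le i j (le_of_lt hij) hjL
    have huT : ∀ e, (el i).cnt e ≤ T.cnt e := hcnt_leT i hiL
    refine hskel ⟨fun e => (el i).cnt e - (el j).cnt e, (el i).root, ⟨?_, ?_, ?_⟩, ?_, ?_, ?_, ?_⟩
    · -- support in delta
      intro e he
      exact g.cnt_mem hTuval (lt_of_lt_of_le he (Nat.sub_le _ _))
    · -- Euler condition for the cycle
      intro q
      have r1 := (g.tvalid_run hTuval).2.1 q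
      have r2 := (g.tvalid_run hTvval).2.1 q
      rw [hroots] at r2
      simp only [Pi.zero_apply, Nat.cast_zero, sub_zero] at r1 r2
      have hs1 : g.srcCount (el i).cnt q =
          g.srcCount (fun e => (el i).cnt e - (el j).cnt e) q +
            g.srcCount (el j).cnt q :=
        g.srcCount_split (fun e => by have := hvu e; omega) q
      have hs2 : g.tgtCount (el i).cnt q =
          g.tgtCount (fun e => (el i).cnt e - (el j).cnt e) q +
            g.tgtCount (el j).cnt q :=
        g.tgtCount_split (fun e => by have := hvu e; omega) q
      omega
    · -- connectivity of the cycle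
      intro q hq
      exact ⟨(el i).root, by simp [ind],
        g.conn_diff (el i) (hsub2 i j (le_of_lt hij) hjL) hTuval q hq⟩
    · -- nonzero
      refine ⟨(el i).trans, ?_⟩
      show 0 < (el i).cnt (el i).trans - (el j).cnt (el i).trans
      have := hstrict i j hij hjL
      omega
    · -- C ≤ R
      intro e
      show (el i).cnt e - (el j).cnt e ≤ R e
      have h1 := hvu e
      have h2 := huT e
      have h3 := hTcnt e
      omega
    · -- R - C is a run
      obtain ⟨T'', hT''v, hT''root, hT''cnt⟩ := g.graft T hTval i hiL (el j) hTvval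
        (by rw [← hel i hiL]; exact hroots)
      have hfun : (fun e => R e - ((el i).cnt e - (el j).cnt e)) = T''.cnt := by
        funext e
        have h1 := hT''cnt e
        rw [← hel i hiL] at h1
        have h2 := hTcnt e
        have h3 := hvu e
        have h4 := huT e
        omega
      rw [hfun]
      have := g.tvalid_run hT''v
      rwa [hT''root, hTroot] at this
    · -- same support
      show ∀ q, 0 < g.srcCount (fun e => R e - ((el i).cnt e - (el j).cnt e)) q ↔
          0 < g.srcCount R q
      intro q
      constructor
      · intro hpos
        refine lt_of_lt_of_le hpos (g.srcCount_mono ?_ q)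
        intro e
        omega
      · intro hpos
        have hs1a : g.srcCount R q =
            g.srcCount (fun e => T.cnt e - (el i).cnt e) q +
              g.srcCount (fun e => ((el i).cnt e - (el j).cnt e) + (el j).cnt e) q :=
          g.srcCount_split (f₁ := fun e => T.cnt e - (el i).cnt e)
            (f₂ := fun e => ((el i).cnt e - (el j).cnt e) + (el j).cnt e)
            (fun e => by
              show R e = (T.cnt e - (el i).cnt e) +
                (((el i).cnt e - (el j).cnt e) + (el j).cnt e)
              have h2 := hTcnt e
              have h3 := hvu e
              have h4 := huT e
              omega) q
        have hs1b : g.srcCount (fun e => ((el i).cnt e - (el j).cnt e) + (el j).cnt e) q =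
            g.srcCount (fun e => (el i).cnt e - (el j).cnt e) q +
              g.srcCount (el j).cnt q :=
          g.srcCount_add _ _ q
        have hs2 : g.srcCount (fun e => R e - ((el i).cnt e - (el j).cnt e)) q =
            g.srcCount (fun e => T.cnt e - (el i).cnt e) q +
              g.srcCount (el j).cnt q := by
          refine g.srcCount_split (f₂ := (el j).cnt) ?_ q
          intro e
          have h2 := hTcnt e
          have h3 := hvu e
          have h4 := huT e
          omega
        rcases Nat.eq_zero_or_pos (g.srcCount (fun e => T.cnt e - (el i).cnt e) q)
          with hO | hO
        swap
        · omega
        rcases Nat.eq_zero_or_pos (g.srcCount (el j).cnt q) with hV | hV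
        swap
        · omega
        have hC : 0 < g.srcCount (fun e => (el i).cnt e - (el j).cnt e) q := by omega
        have hqSfj : q ∈ Sf j := by
          rw [hSfmem]
          right
          refine lt_of_lt_of_le hC (g.srcCount_mono ?_ q)
          intro e
          have h3 := hvu e
          have h4 := huT e
          omega
        rw [← hSeq] at hqSfj
        rw [hSfmem] at hqSfj
        rcases hqSfj with hq1 | hq1
        · -- q is the root, so el j contributes
          exfalso
          have : 0 < g.srcCount (el j).cnt q := by
            refine g.srcCount_pos (g.trans_mem hTvval) (PTree.cnt_trans_pos (el j)) ?_
            rw [hq1, ← hroots]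
            rfl
          omega
        · omega
  constructor
  · intro hreg
    have h1 := g.nodes_le_regular hreg hTval
    omega
  · have h1 := PTree.nodes_lt_pow T
    have h2 : 2 ^ T.spine.length ≤ 2 ^ (Fintype.card Q ^ 2) :=
      Nat.pow_le_pow_right (by norm_num) key
    have h3 : 2 ^ (Fintype.card Q ^ 2 + 1) = 2 * 2 ^ (Fintype.card Q ^ 2) := by
      rw [pow_succ]; ring
    have h4 : 0 < 2 ^ (Fintype.card Q ^ 2) := Nat.pow_pos (by norm_num)
    omega
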